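/- Let E be a compact subset of the closure of a domain D in ℝ^N with Hausdorff measure ℋ^m(E) = 0 where m < N, and let K ⊆ E be compact. Then every continuous map f : K → ℝ^m \ {0} which is constant on K ∩ ∂D extends to a continuous map E → ℝ^m \ {0} which is constant on E ∩ ∂D. -/

import Mathlib

open MeasureTheory Metric Set Topology Manifold

lemma aux_continuousOn_union_closed {α β : Type*} [TopologicalSpace α] [TopologicalSpace β]
    {f : α → β} {s t : Set α} (hs : IsClosed s) (ht : IsClosed t)
    (hfs : ContinuousOn f s) (hft : ContinuousOn f t) : ContinuousOn f (s ∪ t) := by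
  intro x hx
  refine continuousWithinAt_union.2 ⟨?_, ?_⟩
  · by_cases hxs : x ∈ s
    · exact hfs x hxs
    · exact continuousWithinAt_of_notMem_closure (by rwa [hs.closure_eq])
  · by_cases hxt : x ∈ t
    · exact hft x hxt
    · exact continuousWithinAt_of_notMem_closure (by rwa [ht.closure_eq])

lemma aux_smooth_approx (N m : ℕ) (H : EuclideanSpace ℝ (Fin N) → EuclideanSpace ℝ (Fin m))
    (hc : Continuous H) (ε : ℝ) (hε : 0 < ε) :
    ∃ G : EuclideanSpace ℝ (Fin N) → EuclideanSpace ℝ (Fin m),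
      ContDiff ℝ 1 G ∧ ∀ x, dist (G x) (H x) < ε := by
  have Hloc : ∀ x : EuclideanSpace ℝ (Fin N), ∃ U ∈ 𝓝 x,
      ∃ g : EuclideanSpace ℝ (Fin N) → EuclideanSpace ℝ (Fin m),
        ContMDiffOn 𝓘(ℝ, EuclideanSpace ℝ (Fin N)) 𝓘(ℝ, EuclideanSpace ℝ (Fin m)) ((⊤ : ℕ∞) : WithTop ℕ∞) g U ∧
        ∀ y ∈ U, g y ∈ ball (H y) ε := by
    intro x
    refine ⟨H ⁻¹' ball (H x) ε, hc.continuousAt.preimage_mem_nhds (ball_mem_nhds _ hε),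
      fun _ => H x, contMDiffOn_const, fun y hy => ?_⟩
    simpa [dist_comm] using hy
  obtain ⟨G, hG⟩ := exists_contMDiffMap_forall_mem_convex_of_local (I := 𝓘(ℝ, EuclideanSpace ℝ (Fin N)))
    (t := fun x => ball (H x) ε) (fun x => convex_ball _ _) Hloc
  exact ⟨G, ((contMDiff_iff_contDiff).mp G.contMDiff).of_le (by exact_mod_cast le_top),
    fun x => hG x⟩

lemma aux_lipschitzOnWith (N m : ℕ) {G : EuclideanSpace ℝ (Fin N) → EuclideanSpace ℝ (Fin m)}
    (hG : ContDiff ℝ 1 G) (R : ℝ) :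
    ∃ C : NNReal, LipschitzOnWith C G (closedBall (0 : EuclideanSpace ℝ (Fin N)) R) := by
  have hfc : ContinuousOn (fun x => ‖fderiv ℝ G x‖) (closedBall (0 : EuclideanSpace ℝ (Fin N)) R) :=
    (hG.continuous_fderiv one_ne_zero).norm.continuousOn
  obtain ⟨c, hc⟩ := (isCompact_closedBall (0 : EuclideanSpace ℝ (Fin N)) R).exists_bound_of_continuousOn hfc
  refine ⟨(max c 0).toNNReal, (convex_closedBall _ _).lipschitzOnWith_of_nnnorm_hasFDerivWithin_le
    (f' := fun x => fderiv ℝ G x) (fun x _ => ((hG.differentiable one_ne_zero) x).hasFDerivAt.hasFDerivWithinAt) ?_⟩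
  intro x hx
  rw [← NNReal.coe_le_coe]
  simp only [coe_nnnorm, Real.coe_toNNReal _ (le_max_right c 0)]
  have := hc x hx
  rw [Real.norm_eq_abs, abs_norm] at this
  exact le_trans this (le_max_left c 0)

lemma aux_avoid (N m : ℕ) (hm : 1 ≤ m) {E : Set (EuclideanSpace ℝ (Fin N))}
    (hEcpt : IsCompact E) (hE0 : μH[(m : ℝ)] E = 0)
    {G : EuclideanSpace ℝ (Fin N) → EuclideanSpace ℝ (Fin m)} (hG : ContDiff ℝ 1 G)
    {ε : ℝ} (hε : 0 < ε) :
    ∃ v : EuclideanSpace ℝ (Fin m), ‖v‖ < ε ∧ ∀ x ∈ E, G x ≠ v := by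
  haveI : NeZero m := ⟨by omega⟩
  obtain ⟨R, hR⟩ := hEcpt.isBounded.subset_closedBall (0 : EuclideanSpace ℝ (Fin N))
  obtain ⟨C, hC⟩ := aux_lipschitzOnWith N m hG R
  have hm0 : (0 : ℝ) ≤ (m : ℝ) := by positivity
  have hT : μH[(m : ℝ)] (G '' E) = 0 := by
    have := (hC.mono hR).hausdorffMeasure_image_le hm0
    rw [hE0, mul_zero] at this
    exact le_antisymm this (zero_le)
  -- move to the product space where Hausdorff measure is the volume
  set π : EuclideanSpace ℝ (Fin m) → (Fin m → ℝ) := ⇑(WithLp.equiv 2 (Fin m → ℝ))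
  have hπ : μH[(m : ℝ)] (π '' (G '' E)) = 0 := by
    have := (PiLp.lipschitzWith_ofLp 2 (fun _ : Fin m => ℝ)).hausdorffMeasure_image_le hm0 (G '' E)
    rw [hT, mul_zero] at this
    exact le_antisymm this (zero_le)
  have hvol : volume (π '' (G '' E)) = 0 := by
    have hpi : (μH[(m : ℝ)] : Measure (Fin m → ℝ)) = volume := by
      have := MeasureTheory.hausdorffMeasure_pi_real (ι := Fin m)
      simpa using this
    rw [← hpi]; exact hπ
  by_contra hcon
  push_neg at hcon
  have hball : ball (0 : EuclideanSpace ℝ (Fin m)) ε ⊆ G '' E := by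
    intro v hv
    obtain ⟨x, hx, hxv⟩ := hcon v (by simpa using hv)
    exact ⟨x, hx, hxv⟩
  have hsub : π '' ball (0 : EuclideanSpace ℝ (Fin m)) ε ⊆ π '' (G '' E) := image_mono hball
  have hhomeo : IsOpenMap π := by
    exact (Homeomorph.mk (WithLp.equiv 2 (Fin m → ℝ)) (PiLp.continuous_ofLp _ _)
      (PiLp.continuous_toLp _ _)).isOpenMap
  have hopen : IsOpen (π '' ball (0 : EuclideanSpace ℝ (Fin m)) ε) := hhomeo _ isOpen_ball
  have hne : (π '' ball (0 : EuclideanSpace ℝ (Fin m)) ε).Nonempty :=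
    ⟨π 0, mem_image_of_mem _ (mem_ball_self hε)⟩
  have := hopen.measure_pos volume hne
  have hle : volume (π '' ball (0 : EuclideanSpace ℝ (Fin m)) ε) ≤ volume (π '' (G '' E)) := measure_mono hsub
  rw [hvol] at hle
  exact absurd (le_antisymm hle (zero_le)) this.ne'

/-- **Lemma 2 (Chirka).** If `E` is a compact subset of the closure of a domain `D ⊆ ℝ^N`
with `ℋ^m(E) = 0`, `m < N`, and `K ⊆ E` is compact, then every continuous map
`f : K → ℝ^m \ {0}` which is constant on `K ∩ ∂D` extends to a continuous map
`E → ℝ^m \ {0}` which is constant on `E ∩ ∂D`. -/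
theorem chirka_lemma2_extension
    {N m : ℕ} (hm : 1 ≤ m) (hmN : m < N)
    (D : Set (EuclideanSpace ℝ (Fin N))) (hDopen : IsOpen D) (hDconn : IsConnected D)
    (E : Set (EuclideanSpace ℝ (Fin N))) (hEcpt : IsCompact E) (hED : E ⊆ closure D)
    (hE0 : μH[(m : ℝ)] E = 0)
    (K : Set (EuclideanSpace ℝ (Fin N))) (hKcpt : IsCompact K) (hKE : K ⊆ E)
    (f : EuclideanSpace ℝ (Fin N) → EuclideanSpace ℝ (Fin m))
    (hfc : ContinuousOn f K) (hf0 : ∀ x ∈ K, f x ≠ 0)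
    (a : EuclideanSpace ℝ (Fin m)) (hfa : ∀ x ∈ K ∩ frontier D, f x = a) :
    ∃ g : EuclideanSpace ℝ (Fin N) → EuclideanSpace ℝ (Fin m),
      ContinuousOn g E ∧ (∀ x ∈ K, g x = f x) ∧ (∀ x ∈ E, g x ≠ 0) ∧
      ∃ b : EuclideanSpace ℝ (Fin m), ∀ x ∈ E ∩ frontier D, g x = b := by
  classical
  set F := frontier D with hF
  set S : Set (EuclideanSpace ℝ (Fin N)) := K ∪ (E ∩ F) with hS
  have hEFcpt : IsCompact (E ∩ F) := hEcpt.inter_right isClosed_frontier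
  have hScpt : IsCompact S := hKcpt.union hEFcpt
  have hSclosed : IsClosed S := hScpt.isClosed
  -- the constant value
  set b : EuclideanSpace ℝ (Fin m) :=
    if a = 0 then EuclideanSpace.single (⟨0, hm⟩ : Fin m) (1 : ℝ) else a with hb
  have hsingle : EuclideanSpace.single (⟨0, hm⟩ : Fin m) (1 : ℝ) ≠ 0 := by
    intro h0
    have := congrArg (fun w => w (⟨0, hm⟩ : Fin m)) h0
    simp [EuclideanSpace.single_apply] at this
  have hb0 : b ≠ 0 := by
    by_cases ha : a = 0 <;> simp [hb, ha, hsingle]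
  have hab : ∀ x ∈ K ∩ F, f x = b := by
    intro x hx
    have hfx := hfa x hx
    have ha : a ≠ 0 := by
      rw [← hfx]; exact hf0 x hx.1
    rw [hb, if_neg ha]; exact hfx
  -- the glued map
  set h : EuclideanSpace ℝ (Fin N) → EuclideanSpace ℝ (Fin m) :=
    fun x => if x ∈ F then b else f x with hh
  have hhK : EqOn h f K := by
    intro x hx
    by_cases hxF : x ∈ F
    · simp only [hh, if_pos hxF]
      exact (hab x ⟨hx, hxF⟩).symm
    · simp [hh, hxF]
  have hhconst : ∀ x ∈ E ∩ F, h x = b := fun x hx => by simp [hh, hx.2]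
  have hhcont : ContinuousOn h S := by
    refine aux_continuousOn_union_closed hKcpt.isClosed hEFcpt.isClosed
      (hfc.congr hhK) (continuousOn_const.congr hhconst)
  have hh0 : ∀ x ∈ S, h x ≠ 0 := by
    intro x hx
    by_cases hxF : x ∈ F
    · rw [hh]; simpa [hxF] using hb0
    · have hxK : x ∈ K := by
        rcases hx with hx | hx
        · exact hx
        · exact absurd hx.2 hxF
      rw [hh]; simpa [hxF] using hf0 x hxK
  -- a positive lower bound for `‖h‖` on `S`
  obtain ⟨δ, hδpos, hδle⟩ : ∃ δ : ℝ, 0 < δ ∧ ∀ x ∈ S, δ ≤ ‖h x‖ := by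
    rcases S.eq_empty_or_nonempty with hSe | hSne
    · exact ⟨1, one_pos, by simp [hSe]⟩
    · obtain ⟨x₀, hx₀S, hx₀⟩ := hScpt.exists_isMinOn hSne hhcont.norm
      refine ⟨‖h x₀‖, ?_, fun x hx => hx₀ hx⟩
      simpa [norm_pos_iff] using hh0 x₀ hx₀S
  -- Tietze extension of `h`
  obtain ⟨H₀, hH₀⟩ : ∃ H₀ : C(EuclideanSpace ℝ (Fin N), EuclideanSpace ℝ (Fin m)),
      ∀ x ∈ S, H₀ x = h x := by
    obtain ⟨g', hg'⟩ := ContinuousMap.exists_restrict_eq (Y := EuclideanSpace ℝ (Fin m))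
      hSclosed ⟨S.restrict h, hhcont.restrict⟩
    exact ⟨g', fun x hx => DFunLike.congr_fun hg' ⟨x, hx⟩⟩
  set ε : ℝ := δ / 8 with hε
  have hεpos : 0 < ε := by positivity
  obtain ⟨G, hGsm, hGd⟩ := aux_smooth_approx N m H₀ H₀.continuous ε hεpos
  obtain ⟨v, hvnorm, hvE⟩ := aux_avoid N m hm hEcpt hE0 hGsm hεpos
  -- the cutoff
  set ψ : EuclideanSpace ℝ (Fin N) → ℝ :=
    fun x => max 0 (min 1 (2 - 2 * ‖H₀ x‖ / δ)) with hψ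
  have hψcont : Continuous ψ := by
    apply continuous_const.max
    apply continuous_const.min
    fun_prop
  have hψ0 : ∀ x, δ ≤ ‖H₀ x‖ → ψ x = 0 := by
    intro x hx
    have ht : 2 - 2 * ‖H₀ x‖ / δ ≤ 0 := by
      rw [sub_nonpos, le_div_iff₀ hδpos]
      nlinarith
    rw [hψ]
    exact max_eq_left (le_trans (min_le_right _ _) ht)
  have hψ1 : ∀ x, ‖H₀ x‖ ≤ δ / 2 → ψ x = 1 := by
    intro x hx
    have ht : (1 : ℝ) ≤ 2 - 2 * ‖H₀ x‖ / δ := by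
      have h2 : 2 * ‖H₀ x‖ / δ ≤ 1 := by
        rw [div_le_one hδpos]; linarith
      linarith
    have hrfl : ψ x = max 0 (min 1 (2 - 2 * ‖H₀ x‖ / δ)) := rfl
    rw [hrfl, min_eq_left ht, max_eq_right zero_le_one]
  have hψle : ∀ x, ψ x ≤ 1 := fun x => max_le zero_le_one (min_le_left _ _)
  have hψnn : ∀ x, 0 ≤ ψ x := fun x => le_max_left _ _
  -- the final map
  set g : EuclideanSpace ℝ (Fin N) → EuclideanSpace ℝ (Fin m) :=
    fun x => H₀ x + ψ x • (G x - v - H₀ x) with hg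
  have hgcont : Continuous g := by
    apply H₀.continuous.add
    exact hψcont.smul ((hGsm.continuous.sub continuous_const).sub H₀.continuous)
  have hgS : ∀ x ∈ S, g x = h x := by
    intro x hx
    have hx0 : ψ x = 0 := hψ0 x (by rw [hH₀ x hx]; exact hδle x hx)
    rw [hg]
    simp only [hx0, zero_smul, add_zero]
    exact hH₀ x hx
  refine ⟨g, hgcont.continuousOn, ?_, ?_, ⟨b, ?_⟩⟩
  · intro x hx
    rw [hgS x (Or.inl hx)]
    exact hhK hx
  · -- nonvanishing on E
    intro x hxE
    by_cases hx2 : ‖H₀ x‖ ≤ δ / 2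
    · have h1 : ψ x = 1 := hψ1 x hx2
      have : g x = G x - v := by
        show H₀ x + ψ x • (G x - v - H₀ x) = G x - v
        rw [h1, one_smul]; abel
      rw [this]
      exact sub_ne_zero.mpr (hvE x hxE)
    · push_neg at hx2
      have hw : ‖G x - v - H₀ x‖ ≤ ‖G x - H₀ x‖ + ‖v‖ := by
        have : G x - v - H₀ x = (G x - H₀ x) - v := by abel
        rw [this]
        exact norm_sub_le _ _
      have hGH : ‖G x - H₀ x‖ < ε := by
        rw [← dist_eq_norm]; exact hGd x
      have hsmul : ‖ψ x • (G x - v - H₀ x)‖ ≤ ‖G x - v - H₀ x‖ := by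
        rw [norm_smul, Real.norm_eq_abs, abs_of_nonneg (hψnn x)]
        nlinarith [norm_nonneg (G x - v - H₀ x), hψle x]
      have hkey : ‖H₀ x‖ ≤ ‖g x‖ + ‖ψ x • (G x - v - H₀ x)‖ := by
        have heq : g x - ψ x • (G x - v - H₀ x) = H₀ x :=
          add_sub_cancel_right (H₀ x) (ψ x • (G x - v - H₀ x))
        calc ‖H₀ x‖ = ‖g x - ψ x • (G x - v - H₀ x)‖ := by rw [heq]
          _ ≤ ‖g x‖ + ‖ψ x • (G x - v - H₀ x)‖ := norm_sub_le _ _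
      have : 0 < ‖g x‖ := by
        have hεδ : ε = δ / 8 := hε
        linarith
      exact fun h0 => by simp [h0] at this
  · intro x hx
    rw [hgS x (Or.inr hx)]
    exact hhconst x hx
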